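/- If x* satisfies the single-virus SIS fixed point equations for (A, τ), where A is the adjacency matrix of a connected undirected graph on N ≥ 1 vertices and τ > 0, then the average infection probability satisfies (1/N)·Σ_{i=1}^N x*_i ≤ 1 − 1/(τ·λ(A)). -/

import Mathlib

open Matrix Finset

/-- Spectral radius of a real matrix: supremum of absolute values of its complex eigenvalues. -/
noncomputable def specRad {N : ℕ} (M : Matrix (Fin N) (Fin N) ℝ) : ℝ :=
  sSup ((fun z => ‖z‖) '' spectrum ℂ (M.map Complex.ofReal))

/-- `A` is the adjacency matrix of a connected undirected graph:
symmetric, 0/1 entries, zero diagonal, and irreducible (connectivity). -/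
def IsConnectedAdjMatrix {N : ℕ} (A : Matrix (Fin N) (Fin N) ℝ) : Prop :=
  A.IsSymm ∧ (∀ i j, A i j = 0 ∨ A i j = 1) ∧ (∀ i, A i i = 0) ∧
    (∀ i j, i ≠ j → ∃ k : ℕ, 0 < (A ^ k) i j)

/-- `x` satisfies the single-virus SIS fixed point equations for `(A, τ)`. -/
def IsSISFixedPoint {N : ℕ} (A : Matrix (Fin N) (Fin N) ℝ) (τ : ℝ)
    (x : Fin N → ℝ) : Prop :=
  (∀ i, 0 < x i ∧ x i < 1) ∧ (∀ i, ∑ j, A i j * x j = x i / (τ * (1 - x i)))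

lemma mem_spectrum_map_ofReal {N : ℕ} (A : Matrix (Fin N) (Fin N) ℝ) {μ : ℝ}
    (h : μ ∈ spectrum ℝ A) : (μ : ℂ) ∈ spectrum ℂ (A.map Complex.ofReal) := by
  rw [spectrum.mem_iff] at h ⊢
  intro hU
  apply h
  rw [Matrix.isUnit_iff_isUnit_det] at hU ⊢
  have key : (algebraMap ℂ (Matrix (Fin N) (Fin N) ℂ) (μ : ℂ) - A.map Complex.ofReal)
      = (algebraMap ℝ (Matrix (Fin N) (Fin N) ℝ) μ - A).map Complex.ofReal := by
    ext i j
    by_cases hij : i = j <;>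
      simp [Matrix.algebraMap_eq_diagonal, Matrix.map_apply, Matrix.diagonal_apply, hij]
  rw [key] at hU
  have hdet : ((algebraMap ℝ (Matrix (Fin N) (Fin N) ℝ) μ - A).map Complex.ofReal).det
      = ((algebraMap ℝ (Matrix (Fin N) (Fin N) ℝ) μ - A).det : ℂ) := by
    exact (RingHom.map_det Complex.ofRealHom _).symm
  rw [hdet] at hU
  rw [isUnit_iff_ne_zero] at hU ⊢
  exact fun h0 => hU (by rw [h0]; simp)

lemma eigenvalue_le_specRad {N : ℕ} (A : Matrix (Fin N) (Fin N) ℝ) {μ : ℝ}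
    (h : μ ∈ spectrum ℝ A) : μ ≤ specRad A := by
  have hmem : ‖(μ : ℂ)‖ ∈
      ((fun z => ‖z‖) '' spectrum ℂ (A.map Complex.ofReal)) :=
    Set.mem_image_of_mem _ (mem_spectrum_map_ofReal A h)
  have hbdd : BddAbove ((fun z => ‖z‖) '' spectrum ℂ (A.map Complex.ofReal)) :=
    ((Matrix.finite_spectrum _).image _).bddAbove
  calc μ ≤ |μ| := le_abs_self μ
    _ = ‖(μ : ℂ)‖ := by simp
    _ ≤ specRad A := le_csSup hbdd hmem

lemma rayleigh_le {N : ℕ} (A : Matrix (Fin N) (Fin N) ℝ) (hsymm : A.IsSymm)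
    (x : Fin N → ℝ) :
    x ⬝ᵥ (A *ᵥ x) ≤ specRad A * (x ⬝ᵥ x) := by
  have hH : A.IsHermitian := by
    rw [Matrix.IsHermitian, Matrix.conjTranspose_eq_transpose_of_trivial]; exact hsymm
  set U : Matrix (Fin N) (Fin N) ℝ := (hH.eigenvectorUnitary : Matrix (Fin N) (Fin N) ℝ) with hU
  set μ : Fin N → ℝ := hH.eigenvalues with hμ
  have hUU : U * star U = 1 := Matrix.mem_unitaryGroup_iff.mp hH.eigenvectorUnitary.2
  have hspec : A = U * Matrix.diagonal μ * star U := by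
    have h := hH.spectral_theorem
    rwa [show (RCLike.ofReal ∘ μ : Fin N → ℝ) = μ from funext fun i => rfl] at h
  set y : Fin N → ℝ := star U *ᵥ x with hy
  have hx' : U *ᵥ y = x := by
    rw [hy, Matrix.mulVec_mulVec, hUU, Matrix.one_mulVec]
  have hxU : x ᵥ* U = y := by
    rw [hy, Matrix.star_eq_conjTranspose, Matrix.conjTranspose_eq_transpose_of_trivial,
      Matrix.mulVec_transpose]
  have hquad : x ⬝ᵥ (A *ᵥ x) = ∑ j, μ j * (y j * y j) := by
    rw [hspec]
    rw [show (U * Matrix.diagonal μ * star U) *ᵥ x = U *ᵥ (Matrix.diagonal μ *ᵥ y) by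
      rw [hy, ← Matrix.mulVec_mulVec, ← Matrix.mulVec_mulVec]]
    rw [Matrix.dotProduct_mulVec, hxU]
    simp only [dotProduct, Matrix.mulVec_diagonal]
    exact Finset.sum_congr rfl fun j _ => by ring
  have hnorm : x ⬝ᵥ x = ∑ j, y j * y j := by
    have h0 : x ⬝ᵥ x = x ⬝ᵥ (U *ᵥ y) := by rw [hx']
    rw [h0, Matrix.dotProduct_mulVec, hxU]
    rfl
  rw [hquad, hnorm, Finset.mul_sum]
  apply Finset.sum_le_sum
  intro j _
  have h1 : μ j ≤ specRad A :=
    eigenvalue_le_specRad A (hH.eigenvalues_mem_spectrum_real j)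
  have h2 : 0 ≤ y j * y j := mul_self_nonneg _
  exact mul_le_mul_of_nonneg_right h1 h2

/-- If `x*` satisfies the single-virus SIS fixed point equations for `(A, τ)`,
where `A` is the adjacency matrix of a connected undirected graph on `N ≥ 1` vertices and
`τ > 0`, then the average infection probability satisfies
`(1/N)·Σ_i x*_i ≤ 1 − 1/(τ·λ(A))`. -/
theorem avg_infection_upper_bound {N : ℕ} (hN : 1 ≤ N)
    (A : Matrix (Fin N) (Fin N) ℝ) (hA : IsConnectedAdjMatrix A)
    (τ : ℝ) (hτ : 0 < τ)
    (xstar : Fin N → ℝ) (hx : IsSISFixedPoint A τ xstar) :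
    (1 / (N : ℝ)) * ∑ i, xstar i ≤ 1 - 1 / (τ * specRad A) := by
  obtain ⟨hsymm, -, -, -⟩ := hA
  obtain ⟨hx01, hfe⟩ := hx
  set x := xstar with hxdef
  set r := specRad A with hr
  set s := τ * r with hs
  -- Rayleigh inequality applied to x
  have hray : ∑ i, x i * (x i / (τ * (1 - x i))) ≤ r * ∑ i, x i * x i := by
    have h := rayleigh_le A hsymm x
    have hlhs : x ⬝ᵥ (A *ᵥ x) = ∑ i, x i * (x i / (τ * (1 - x i))) := by
      unfold dotProduct Matrix.mulVec
      exact Finset.sum_congr rfl fun i _ => by rw [← hfe i]; rfl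
    rwa [hlhs] at h
  -- rewrite terms
  have h1x : ∀ i, 0 < 1 - x i := fun i => by have := (hx01 i).2; linarith
  have hterm : ∀ i, x i * (x i / (τ * (1 - x i))) = x i * x i / (τ * (1 - x i)) := by
    intro i; ring
  -- key scaled inequality : ∑ x i ^2 / (1 - x i) ≤ s * ∑ x i ^ 2
  have hkey : ∑ i, x i * x i / (1 - x i) ≤ s * ∑ i, x i * x i := by
    have := mul_le_mul_of_nonneg_left hray hτ.le
    calc ∑ i, x i * x i / (1 - x i)
        = τ * ∑ i, x i * (x i / (τ * (1 - x i))) := by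
          rw [Finset.mul_sum]
          refine Finset.sum_congr rfl fun i _ => ?_
          have e1 : τ * (x i * (x i / (τ * (1 - x i)))) = τ * (x i * x i) / (τ * (1 - x i)) := by
            ring
          rw [e1, mul_div_mul_left _ _ hτ.ne']
      _ ≤ τ * (r * ∑ i, x i * x i) := this
      _ = s * ∑ i, x i * x i := by rw [hs]; ring
  -- positivity of sums
  have hsumsq_pos : 0 < ∑ i, x i * x i := by
    apply Finset.sum_pos
    · intro i _; exact mul_pos (hx01 i).1 (hx01 i).1
    · exact Finset.univ_nonempty_iff.mpr (Fin.pos_iff_nonempty.mp hN)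
  -- s > 1
  have hs1 : 1 < s := by
    have hstrict : ∑ i, x i * x i < ∑ i, x i * x i / (1 - x i) := by
      apply Finset.sum_lt_sum_of_nonempty (Finset.univ_nonempty_iff.mpr (Fin.pos_iff_nonempty.mp hN))
      intro i _
      have hxi := (hx01 i).1
      have h1 := h1x i
      have hx2 : 0 < x i * x i := mul_pos hxi hxi
      rw [lt_div_iff₀ h1]
      nlinarith [(hx01 i).2]
    have := lt_of_lt_of_le hstrict hkey
    by_contra hcon
    push_neg at hcon
    nlinarith
  have hs0 : 0 < s := lt_trans one_pos hs1
  set t : ℝ := 1 - 1/s with ht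
  have ht0 : 0 < t := by rw [ht]; have : 1/s < 1 := by rw [div_lt_one hs0]; exact hs1
                         linarith
  have ht1 : t < 1 := by rw [ht]; have : 0 < 1/s := by positivity
                         linarith
  -- pointwise inequality
  have hpt : ∀ i, s * (t * t / (1 - t)) * (x i - t) ≤ x i * x i / (1 - x i) - s * (x i * x i) := by
    intro i
    have hxi0 := (hx01 i).1
    have hxi1 := (hx01 i).2
    have h1 := h1x i
    have h1t : 0 < 1 - t := by linarith
    have hE : x i * x i / (1 - x i) - s * (x i * x i) - s * (t * t / (1 - t)) * (x i - t)
        = s * (x i - t)^2 * (x i + t - x i * t) / ((1 - x i) * (1 - t)) := by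
      rw [ht]
      field_simp
      ring
    have hpos : 0 ≤ s * (x i - t)^2 * (x i + t - x i * t) / ((1 - x i) * (1 - t)) := by
      apply div_nonneg
      · apply mul_nonneg (mul_nonneg hs0.le (sq_nonneg _))
        nlinarith
      · positivity
    linarith [hE ▸ hpos]
  -- sum the pointwise inequality
  have hsum : s * (t * t / (1 - t)) * (∑ i, (x i - t)) ≤ 0 := by
    have h2 : ∑ i, (s * (t * t / (1 - t)) * (x i - t)) ≤
        ∑ i, (x i * x i / (1 - x i) - s * (x i * x i)) := Finset.sum_le_sum fun i _ => hpt i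
    rw [Finset.mul_sum]
    have h3 : ∑ i, (x i * x i / (1 - x i) - s * (x i * x i)) ≤ 0 := by
      rw [Finset.sum_sub_distrib, ← Finset.mul_sum]
      linarith
    linarith
  have hc : 0 < s * (t * t / (1 - t)) := by
    have h1t : 0 < 1 - t := by linarith
    positivity
  have hsum2 : ∑ i, (x i - t) ≤ 0 := by
    by_contra hcon
    push_neg at hcon
    nlinarith [mul_pos hc hcon]
  -- finish: ∑ x i ≤ N * t
  have hNt : ∑ i, x i ≤ N * t := by
    have : ∑ i, (x i - t) = (∑ i, x i) - N * t := by
      rw [Finset.sum_sub_distrib]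
      simp [Finset.card_univ, mul_comm]
    linarith [this ▸ hsum2]
  have hN0 : (0:ℝ) < N := by exact_mod_cast hN
  rw [div_mul_eq_mul_div, div_le_iff₀ hN0, one_mul]
  calc ∑ i, x i ≤ N * t := hNt
    _ = (1 - 1/(τ * r)) * N := by rw [ht, hs]; ring
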